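/- arXiv:2006.12476 — 2 statements merged into one kernel-verified Lean document; each statement's English description precedes it below -/
import Mathlib

section
/- For every 0 < c < 1/2 there exist constants a, b > 0 (depending only on c) such that for all sufficiently large d there is a set S of matrices in ℝ^{2×d}, each of whose two rows is a unit vector, with |S| ≥ 2^{a·d^c}, such that for every pair of distinct matrices A, B ∈ S one has ‖A Bᵀ‖₂ ≤ b · d^{c − 1/2}. -/
open MeasureTheory ProbabilityTheory Real Finset

/-- Spectral (operator) norm of a square real matrix. -/
noncomputable def spec {n : ℕ} (M : Matrix (Fin n) (Fin n) ℝ) : ℝ :=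
  ‖Matrix.toEuclideanCLM (𝕜 := ℝ) M‖

open Finset

section Constr
variable (p s d : ℕ) [Fact p.Prime] (hpd : p * p ≤ d)

set_option linter.unusedSectionVars false
variable {F : Type*} [Field F] [Fintype F] [DecidableEq F]

theorem coeff_mySum {s : ℕ} (a : Fin s → F) (j : Fin s) :
    (∑ i : Fin s, Polynomial.C (a i) * Polynomial.X ^ (i:ℕ)).coeff j = a j := by
  rw [Polynomial.finset_sum_coeff]
  simp only [Polynomial.coeff_C_mul, Polynomial.coeff_X_pow]
  rw [Finset.sum_eq_single j] <;> simp +contextual [Fin.val_eq_val, eq_comm]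

theorem agree_card_le {s : ℕ} (hs : 1 ≤ s) (a b : Fin s → F) (hab : a ≠ b) :
    (Finset.univ.filter fun x : F =>
        (∑ i : Fin s, a i * x ^ (i:ℕ)) = ∑ i : Fin s, b i * x ^ (i:ℕ)).card ≤ s - 1 := by
  set q : Polynomial F := ∑ i : Fin s, Polynomial.C (a i - b i) * Polynomial.X ^ (i:ℕ) with hq
  have hq0 : q ≠ 0 := by
    obtain ⟨j, hj⟩ := Function.ne_iff.1 hab
    intro h
    have h2 := coeff_mySum (fun i => a i - b i) j
    rw [← hq, h] at h2
    simp only [Polynomial.coeff_zero] at h2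
    exact hj (sub_eq_zero.mp h2.symm)
  have hdeg : q.natDegree ≤ s - 1 := by
    refine Polynomial.natDegree_sum_le_of_forall_le _ _ fun i _ => ?_
    refine le_trans (Polynomial.natDegree_C_mul_le _ _) ?_
    simp only [Polynomial.natDegree_X_pow]
    omega
  have heval : ∀ x : F, ((∑ i : Fin s, a i * x ^ (i:ℕ)) = ∑ i : Fin s, b i * x ^ (i:ℕ))
      ↔ q.IsRoot x := by
    intro x
    rw [hq, Polynomial.IsRoot.def, Polynomial.eval_finset_sum]
    simp only [Polynomial.eval_mul, Polynomial.eval_C, Polynomial.eval_pow, Polynomial.eval_X,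
      sub_mul, Finset.sum_sub_distrib]
    constructor <;> intro h <;> [rw [h]; exact sub_eq_zero.mp h] <;> ring
  calc (Finset.univ.filter fun x : F =>
        (∑ i : Fin s, a i * x ^ (i:ℕ)) = ∑ i : Fin s, b i * x ^ (i:ℕ)).card
      ≤ q.roots.toFinset.card := by
        apply Finset.card_le_card
        intro x hx
        simp only [Finset.mem_filter] at hx
        rw [Multiset.mem_toFinset, Polynomial.mem_roots hq0]
        exact (heval x).mp hx.2
    _ ≤ Multiset.card q.roots := Multiset.toFinset_card_le _
    _ ≤ q.natDegree := Polynomial.card_roots' q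
    _ ≤ s - 1 := hdeg

noncomputable def ev (a : Fin s → ZMod p) (x : ZMod p) : ZMod p := ∑ i, a i * x ^ (i:ℕ)

noncomputable def phi (a : Fin s → ZMod p) (x : ZMod p) : Fin d :=
  ⟨x.val * p + (ev p s a x).val, by
    have hp : 0 < p := (Fact.out : p.Prime).pos
    have h1 : x.val < p := ZMod.val_lt x
    have h2 : (ev p s a x).val < p := ZMod.val_lt _
    calc x.val * p + (ev p s a x).val < x.val * p + p := by omega
      _ = (x.val + 1) * p := by ring
      _ ≤ p * p := Nat.mul_le_mul_right p (by omega)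
      _ ≤ d := hpd⟩

theorem phi_eq {a b : Fin s → ZMod p} {x y : ZMod p}
    (h : phi p s d hpd a x = phi p s d hpd b y) : x = y ∧ ev p s a x = ev p s b y := by
  have hp : 0 < p := (Fact.out : p.Prime).pos
  have h1 : (ev p s a x).val < p := ZMod.val_lt _
  have h2 : (ev p s b y).val < p := ZMod.val_lt _
  have hv : x.val * p + (ev p s a x).val = y.val * p + (ev p s b y).val :=
    congrArg Fin.val h
  have hmod : (ev p s a x).val = (ev p s b y).val := by
    have := congrArg (· % p) hv
    simpa [Nat.mul_add_mod, Nat.add_mul_mod_self_left, Nat.mod_eq_of_lt h1,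
      Nat.mod_eq_of_lt h2, Nat.mul_comm] using this
  have hx : x.val = y.val := by
    have : x.val * p = y.val * p := by omega
    exact Nat.eq_of_mul_eq_mul_right hp this
  exact ⟨ZMod.val_injective p hx, ZMod.val_injective p hmod⟩
end Constr

section Constr2
variable (p s d : ℕ) [Fact p.Prime] (hpd : p * p ≤ d)

noncomputable def Tset (a : Fin s → ZMod p) : Finset (Fin d) :=
  Finset.univ.image (phi p s d hpd a)

noncomputable def vvec (a : Fin s → ZMod p) : Fin d → ℝ :=
  fun j => if j ∈ Tset p s d hpd a then (Real.sqrt p)⁻¹ else 0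

theorem Tset_card (a : Fin s → ZMod p) : (Tset p s d hpd a).card = p := by
  rw [Tset, Finset.card_image_of_injective _ (fun x y h => (phi_eq p s d hpd h).1)]
  simp [ZMod.card]

theorem vvec_mul (a b : Fin s → ZMod p) (j : Fin d) :
    vvec p s d hpd a j * vvec p s d hpd b j
      = if j ∈ Tset p s d hpd a ∩ Tset p s d hpd b then (p:ℝ)⁻¹ else 0 := by
  have hp : 0 < p := (Fact.out : p.Prime).pos
  have hsq : (Real.sqrt p)⁻¹ * (Real.sqrt p)⁻¹ = (p:ℝ)⁻¹ := by
    rw [← mul_inv, Real.mul_self_sqrt (by positivity)]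
  unfold vvec
  by_cases h1 : j ∈ Tset p s d hpd a <;> by_cases h2 : j ∈ Tset p s d hpd b <;>
    simp [h1, h2, hsq]

theorem vvec_inner (a b : Fin s → ZMod p) :
    ∑ j, vvec p s d hpd a j * vvec p s d hpd b j
      = ((Tset p s d hpd a ∩ Tset p s d hpd b).card : ℝ) * (p:ℝ)⁻¹ := by
  simp only [vvec_mul]
  rw [Finset.sum_ite_mem, Finset.univ_inter, Finset.sum_const, nsmul_eq_mul]

theorem vvec_norm (a : Fin s → ZMod p) : ∑ j, vvec p s d hpd a j ^ 2 = 1 := by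
  have hp : 0 < p := (Fact.out : p.Prime).pos
  have : ∀ j, vvec p s d hpd a j ^ 2 = vvec p s d hpd a j * vvec p s d hpd a j := fun j => sq _
  simp only [this]
  rw [vvec_inner, Finset.inter_self, Tset_card]
  field_simp

theorem inter_card_le (hs1 : 1 ≤ s) (a b : Fin s → ZMod p) (hab : a ≠ b) :
    (Tset p s d hpd a ∩ Tset p s d hpd b).card ≤ s - 1 := by
  classical
  have hsub : Tset p s d hpd a ∩ Tset p s d hpd b ⊆
      Finset.image (phi p s d hpd a)
        (Finset.univ.filter fun x : ZMod p => ev p s a x = ev p s b x) := by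
    intro j hj
    rw [Finset.mem_inter] at hj
    obtain ⟨x, _, hx⟩ := Finset.mem_image.mp hj.1
    obtain ⟨y, _, hy⟩ := Finset.mem_image.mp hj.2
    obtain ⟨hxy, hev⟩ := phi_eq p s d hpd (hx.trans hy.symm)
    subst hxy
    exact Finset.mem_image.mpr ⟨x, Finset.mem_filter.mpr ⟨Finset.mem_univ _, hev⟩, hx⟩
  calc (Tset p s d hpd a ∩ Tset p s d hpd b).card
      ≤ _ := Finset.card_le_card hsub
    _ ≤ (Finset.univ.filter fun x : ZMod p => ev p s a x = ev p s b x).card :=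
        Finset.card_image_le
    _ ≤ s - 1 := by unfold ev; convert agree_card_le hs1 a b hab
end Constr2

theorem spec_const_le (t : ℝ) (ht : 0 ≤ t) (M : Matrix (Fin 2) (Fin 2) ℝ)
    (hM : ∀ i j, M i j = t) : spec M ≤ 2 * t := by
  apply ContinuousLinearMap.opNorm_le_bound _ (by positivity)
  intro x
  have hx : ((Matrix.toEuclideanCLM (𝕜 := ℝ) M) x : Fin 2 → ℝ) = M.mulVec (WithLp.equiv _ _ x) := by
    ext i
    exact congrFun (Matrix.ofLp_toEuclideanCLM (𝕜:=ℝ) M x) i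
  have hmv : ∀ i, M.mulVec (WithLp.equiv _ _ x) i = t * (x 0 + x 1) := by
    intro i
    simp [Matrix.mulVec, dotProduct, Fin.sum_univ_two, hM]
    ring
  have hxn : ‖x‖ = Real.sqrt (x 0 ^ 2 + x 1 ^ 2) := by
    rw [EuclideanSpace.norm_eq]
    simp [Fin.sum_univ_two, sq_abs]
  have hyn : ‖(Matrix.toEuclideanCLM (𝕜 := ℝ) M) x‖
      = Real.sqrt (2 * (t * (x 0 + x 1))^2) := by
    rw [EuclideanSpace.norm_eq]
    congr 1
    have h0 := congrFun hx 0
    have h1 := congrFun hx 1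
    simp only [Fin.sum_univ_two, Real.norm_eq_abs, sq_abs]
    rw [h0, h1, hmv 0, hmv 1]
    ring
  rw [hyn, hxn]
  rw [show (2:ℝ) * t * Real.sqrt (x 0 ^2 + x 1 ^2)
      = Real.sqrt ((2*t)^2 * (x 0 ^2 + x 1 ^2)) by
    rw [Real.sqrt_mul (by positivity), Real.sqrt_sq (by positivity)]]
  apply Real.sqrt_le_sqrt
  nlinarith [sq_nonneg (x 0 - x 1), sq_nonneg t]

section Constr3
variable (p s d : ℕ) [Fact p.Prime] (hpd : p * p ≤ d)

theorem vvec_inj (hs1 : 1 ≤ s) (hsp : s ≤ p) :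
    Function.Injective (vvec p s d hpd) := by
  intro a b h
  by_contra hab
  have hp : 0 < p := (Fact.out : p.Prime).pos
  have hne : ((Real.sqrt p)⁻¹ : ℝ) ≠ 0 := by positivity
  have hT : Tset p s d hpd a = Tset p s d hpd b := by
    ext j
    constructor <;> intro hj
    · by_contra hj2
      have h1 := congrFun h j
      simp only [vvec, if_pos hj, if_neg hj2] at h1
      exact hne h1
    · by_contra hj2
      have h1 := congrFun h j
      simp only [vvec, if_neg hj2, if_pos hj] at h1
      exact hne h1.symm
  have hall : ∀ x : ZMod p, ev p s a x = ev p s b x := by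
    intro x
    have hmem : phi p s d hpd a x ∈ Tset p s d hpd b := by
      rw [← hT]
      exact Finset.mem_image.mpr ⟨x, Finset.mem_univ _, rfl⟩
    obtain ⟨y, _, hy⟩ := Finset.mem_image.mp hmem
    obtain ⟨hxy, hev⟩ := phi_eq p s d hpd hy.symm
    subst hxy
    exact hev.symm ▸ hev
  have hcard : (Finset.univ.filter fun x : ZMod p => ev p s a x = ev p s b x).card = p := by
    rw [Finset.filter_true_of_mem (fun x _ => hall x)]
    simp [ZMod.card]
  have hle : (Finset.univ.filter fun x : ZMod p => ev p s a x = ev p s b x).card ≤ s - 1 := by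
    unfold ev; convert agree_card_le hs1 a b hab
  omega

include hpd in
theorem construction (hs1 : 1 ≤ s) (hsp : s ≤ p) :
    ∃ S : Finset (Matrix (Fin 2) (Fin d) ℝ),
      S.card = p ^ s ∧
      (∀ A ∈ S, ∀ i : Fin 2, ∑ j, A i j ^ 2 = 1) ∧
      ∀ A ∈ S, ∀ B ∈ S, A ≠ B →
        spec (A * B.transpose) ≤ 2 * ((s:ℝ) - 1) / p := by
  classical
  have hp : 0 < p := (Fact.out : p.Prime).pos
  set Amat : (Fin s → ZMod p) → Matrix (Fin 2) (Fin d) ℝ :=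
    fun a => Matrix.of fun _ j => vvec p s d hpd a j with hA
  have hAinj : Function.Injective Amat := by
    intro a b h
    exact vvec_inj p s d hpd hs1 hsp (funext fun j => congrFun (congrFun h 0) j)
  refine ⟨Finset.univ.image Amat, ?_, ?_, ?_⟩
  · rw [Finset.card_image_of_injective _ hAinj]
    simp [ZMod.card]
  · intro A hA2 i
    obtain ⟨a, _, rfl⟩ := Finset.mem_image.mp hA2
    exact vvec_norm p s d hpd a
  · intro A hA2 B hB2 hAB
    obtain ⟨a, _, rfl⟩ := Finset.mem_image.mp hA2
    obtain ⟨b, _, rfl⟩ := Finset.mem_image.mp hB2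
    have hab : a ≠ b := fun h => hAB (h ▸ rfl)
    set t : ℝ := ((Tset p s d hpd a ∩ Tset p s d hpd b).card : ℝ) * (p:ℝ)⁻¹ with ht
    have hent : ∀ i k, (Amat a * (Amat b).transpose) i k = t := by
      intro i k
      rw [Matrix.mul_apply]
      simp only [Matrix.transpose_apply, hA, Matrix.of_apply]
      rw [vvec_inner]
    have ht0 : 0 ≤ t := by positivity
    refine le_trans (spec_const_le t ht0 _ hent) ?_
    rw [ht, div_eq_mul_inv]
    rw [mul_assoc]
    have hcard : ((Tset p s d hpd a ∩ Tset p s d hpd b).card : ℝ) ≤ (s:ℝ) - 1 := by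
      have := inter_card_le p s d hpd hs1 a b hab
      have h2 : ((Tset p s d hpd a ∩ Tset p s d hpd b).card : ℝ) ≤ ((s-1 : ℕ) : ℝ) := by
        exact_mod_cast this
      refine h2.trans ?_
      rw [Nat.cast_sub hs1]
      simp
    have hpinv : (0:ℝ) ≤ (p:ℝ)⁻¹ := by positivity
    nlinarith
end Constr3

theorem stmt7 (c : ℝ) (hc0 : 0 < c) (hc1 : c < 1 / 2) :
    ∃ a b : ℝ, 0 < a ∧ 0 < b ∧
      ∃ D : ℕ, ∀ d : ℕ, D ≤ d →
        ∃ S : Finset (Matrix (Fin 2) (Fin d) ℝ),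
          (2 : ℝ) ^ (a * (d : ℝ) ^ c) ≤ S.card ∧
          (∀ A ∈ S, ∀ i : Fin 2, ∑ j, A i j ^ 2 = 1) ∧
          ∀ A ∈ S, ∀ B ∈ S, A ≠ B →
            spec (A * B.transpose) ≤ b * (d : ℝ) ^ (c - 1 / 2) := by
  refine ⟨1/4, 8, by norm_num, by norm_num, 16, ?_⟩
  intro d hd
  set m := Nat.sqrt d with hm
  have hm2 : 2 ≤ m := by
    rw [hm]
    have : (2:ℕ) * 2 ≤ d := by omega
    exact Nat.le_sqrt.mpr this
  obtain ⟨p, hp, hlow, hhigh⟩ := Nat.exists_prime_lt_and_le_two_mul (m/2) (by omega)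
  haveI : Fact p.Prime := ⟨hp⟩
  have hpd : p * p ≤ d := by
    have h1 : p ≤ m := by omega
    calc p*p ≤ m*m := Nat.mul_le_mul h1 h1
      _ ≤ d := Nat.sqrt_le d
  set x : ℝ := (d:ℝ) with hxdef
  have hx16 : (16:ℝ) ≤ x := by rw [hxdef]; exact_mod_cast hd
  have hx0 : (0:ℝ) < x := by linarith
  set y : ℝ := x ^ ((1:ℝ)/2) with hydef
  have hy0 : 0 < y := Real.rpow_pos_of_pos hx0 _
  have hP : y / 2 < (p:ℝ) := by
    have h1 : m + 1 ≤ 2 * p := by omega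
    have h2 : Real.sqrt x < (m:ℝ) + 1 := by
      rw [Real.sqrt_lt' (by positivity)]
      have h2' : d < (m+1)^2 := Nat.lt_succ_sqrt' d
      rw [hxdef]
      push_cast
      exact_mod_cast h2' 
    have h3 : y = Real.sqrt x := by rw [hydef, Real.sqrt_eq_rpow]
    have h4 : ((m:ℝ) + 1) ≤ 2 * p := by exact_mod_cast h1
    rw [h3]
    linarith
  have hppos : (0:ℝ) < (p:ℝ) := by exact_mod_cast hp.pos
  have hp2 : (2:ℝ) ≤ (p:ℝ) := by exact_mod_cast hp.two_le
  set s := ⌈(p:ℝ) ^ (2*c)⌉₊ with hsdef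
  have hrp : (0:ℝ) < (p:ℝ)^(2*c) := Real.rpow_pos_of_pos hppos _
  have hs1 : 1 ≤ s := Nat.one_le_iff_ne_zero.mpr (by
    simp only [hsdef, ne_eq, Nat.ceil_eq_zero, not_le]
    exact hrp)
  have hsp : s ≤ p := by
    rw [hsdef, Nat.ceil_le]
    calc (p:ℝ)^(2*c) ≤ (p:ℝ)^(1:ℝ) :=
          Real.rpow_le_rpow_of_exponent_le (by linarith) (by linarith)
      _ = p := Real.rpow_one _
  obtain ⟨S, hcard, hunit, hspec⟩ := construction p s d hpd hs1 hsp
  have hyc : (y/2)^(2*c) = x^c / (2:ℝ)^(2*c) := by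
    rw [Real.div_rpow hy0.le (by norm_num)]
    congr 1
    rw [hydef, ← Real.rpow_mul hx0.le]
    congr 1
    ring
  refine ⟨S, ?_, hunit, ?_⟩
  · rw [hcard]
    have key : 1/4 * x ^ c ≤ (s:ℝ) := by
      have h1 : (y/2) ^ (2*c) ≤ (p:ℝ)^(2*c) :=
        Real.rpow_le_rpow (by positivity) hP.le (by linarith)
      have h3 : (2:ℝ)^(2*c) ≤ 2 := by
        calc (2:ℝ)^(2*c) ≤ (2:ℝ)^(1:ℝ) :=
              Real.rpow_le_rpow_of_exponent_le (by norm_num) (by linarith)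
          _ = 2 := Real.rpow_one 2
      have h3b : (0:ℝ) < (2:ℝ)^(2*c) := Real.rpow_pos_of_pos (by norm_num) _
      have hxc : (0:ℝ) < x^c := Real.rpow_pos_of_pos hx0 _
      have h4 : x^c / 2 ≤ x^c / (2:ℝ)^(2*c) :=
        div_le_div_of_nonneg_left hxc.le h3b h3
      have h5 : (p:ℝ)^(2*c) ≤ (s:ℝ) := Nat.le_ceil _
      rw [hyc] at h1
      linarith
    calc (2:ℝ)^(1/4 * x^c) ≤ (2:ℝ)^((s:ℝ)) :=
          Real.rpow_le_rpow_of_exponent_le one_le_two key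
      _ = (2:ℝ)^(s:ℕ) := Real.rpow_natCast 2 s
      _ ≤ (p:ℝ)^(s:ℕ) := pow_le_pow_left₀ (by norm_num) hp2 s
      _ = ((p^s : ℕ):ℝ) := by push_cast; ring
  · intro A hA B hB hAB
    refine (hspec A hA B hB hAB).trans ?_
    have hs_le : (s:ℝ) - 1 ≤ (p:ℝ)^(2*c) := by
      have := Nat.ceil_lt_add_one hrp.le
      rw [← hsdef] at this
      linarith
    have hs0 : (0:ℝ) ≤ (s:ℝ) - 1 := by
      have : (1:ℝ) ≤ (s:ℝ) := by exact_mod_cast hs1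
      linarith
    have h1 : 2*((s:ℝ)-1)/p ≤ 2 * (p:ℝ)^(2*c) / p := by gcongr
    have h2 : 2*(p:ℝ)^(2*c)/(p:ℝ) = 2 * (p:ℝ)^(2*c-1) := by
      rw [Real.rpow_sub hppos, Real.rpow_one]
      ring
    have h3 : (p:ℝ)^(2*c-1) ≤ (y/2)^(2*c-1) :=
      Real.rpow_le_rpow_of_nonpos (by positivity) hP.le (by linarith)
    have h4 : (y/2)^(2*c-1) = x^(c-1/2) * (2:ℝ)^(1-2*c) := by
      rw [Real.div_rpow hy0.le (by norm_num), hydef, ← Real.rpow_mul hx0.le,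
        div_eq_mul_inv, ← Real.rpow_neg (by norm_num : (0:ℝ) ≤ 2)]
      ring_nf
    have h5 : (2:ℝ)^(1-2*c) ≤ 2 := by
      calc (2:ℝ)^(1-2*c) ≤ (2:ℝ)^(1:ℝ) :=
            Real.rpow_le_rpow_of_exponent_le (by norm_num) (by linarith)
        _ = 2 := Real.rpow_one 2
    have hxc : (0:ℝ) ≤ x^(c-1/2) := (Real.rpow_pos_of_pos hx0 _).le
    have h6 : x^(c-1/2) * (2:ℝ)^(1-2*c) ≤ x^(c-1/2) * 2 := by
      apply mul_le_mul_of_nonneg_left h5 hxc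
    calc 2*((s:ℝ)-1)/p ≤ 2 * (p:ℝ)^(2*c) / p := h1
      _ = 2 * (p:ℝ)^(2*c-1) := h2
      _ ≤ 2 * (y/2)^(2*c-1) := by linarith
      _ = 2 * (x^(c-1/2) * (2:ℝ)^(1-2*c)) := by rw [h4]
      _ ≤ 2 * (x^(c-1/2) * 2) := by linarith
      _ ≤ 8 * x^(c-1/2) := by linarith
end

section
/- Let p, q be polynomials on ℝ^d, each of degree at most k, such that E_{x∼N^d}[p(x)·r(x)] = 0 and E_{x∼N^d}[q(x)·r(x)] = 0 for every polynomial r of degree at most k−1 (i.e., p and q are harmonic of degree k). Then for every 0 ≤ ℓ ≤ k, E_{x∼N^d}[ ⟨∇^ℓ p(x), ∇^ℓ q(x)⟩ ] = k(k−1)⋯(k−ℓ+1) · E_{x∼N^d}[p(x) q(x)], where ⟨∇^ℓ p(x), ∇^ℓ q(x)⟩ := Σ_{i₁,…,i_ℓ = 1}^d (∂_{i₁}⋯∂_{i_ℓ} p)(x) · (∂_{i₁}⋯∂_{i_ℓ} q)(x). In particular, for ℓ = k the quantity ⟨∇^k p, ∇^k q⟩ is a constant (independent of x) equal to k! · E_{x∼N^d}[p(x)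 q(x)]. -/
open MeasureTheory ProbabilityTheory Real Filter Finset
open scoped ENNReal NNReal
set_option maxRecDepth 4000

noncomputable def φg (x : ℝ) : ℝ := gaussianPDFReal 0 1 x

lemma φg_def (x : ℝ) : φg x = (√(2 * π))⁻¹ * rexp (-x ^ 2 / 2) := by
  simp [φg, gaussianPDFReal]

lemma φg_nonneg (x : ℝ) : 0 ≤ φg x := gaussianPDFReal_nonneg 0 1 x

lemma measurable_φg : Measurable φg := measurable_gaussianPDFReal 0 1

lemma gauss_eq_withDensity :
    gaussianReal 0 1 = volume.withDensity (fun x => ((φg x).toNNReal : ℝ≥0∞)) := by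
  rw [gaussianReal_of_var_ne_zero 0 one_ne_zero]
  rfl

lemma integral_gauss_eq (f : ℝ → ℝ) :
    ∫ x, f x ∂(gaussianReal 0 1) = ∫ x, φg x * f x := by
  rw [gauss_eq_withDensity,
    integral_withDensity_eq_integral_smul (measurable_φg.real_toNNReal) f]
  congr 1
  ext x
  rw [NNReal.smul_def, Real.coe_toNNReal _ (φg_nonneg x), smul_eq_mul]

lemma integrable_pow_mul_φg (n : ℕ) :
    Integrable (fun x : ℝ => x ^ n * φg x) := by
  have h := integrable_rpow_mul_exp_neg_mul_sq (b := 2⁻¹) (by norm_num) (s := n)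
    (lt_of_lt_of_le (by norm_num) (Nat.cast_nonneg n))
  have h2 : Integrable (fun x : ℝ => x ^ n * rexp (-2⁻¹ * x ^ 2)) := by
    simpa [Real.rpow_natCast] using h
  have h3 := h2.const_mul (√(2 * π))⁻¹
  apply h3.congr
  filter_upwards with x
  simp only [φg_def]
  ring_nf

lemma integrable_pow_gauss (n : ℕ) :
    Integrable (fun x : ℝ => x ^ n) (gaussianReal 0 1) := by
  rw [gauss_eq_withDensity]
  rw [integrable_withDensity_iff_integrable_smul measurable_φg.real_toNNReal]
  apply (integrable_pow_mul_φg n).congr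
  filter_upwards with x
  rw [NNReal.smul_def, Real.coe_toNNReal _ (φg_nonneg x), smul_eq_mul, mul_comm]

lemma hasDerivAt_φg (x : ℝ) : HasDerivAt φg (-x * φg x) x := by
  have h1 : HasDerivAt (fun x : ℝ => -x ^ 2 / 2) (-x) x := by
    have := ((hasDerivAt_pow 2 x).neg).div_const 2
    simpa using this.congr_deriv (by ring)
  have h2 := (h1.exp).const_mul (√(2 * π))⁻¹
  have hfe : φg = fun y => (√(2 * π))⁻¹ * rexp (-y ^ 2 / 2) := funext φg_def
  rw [hfe]
  simp only [φg_def]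
  exact h2.congr_deriv (by ring)

lemma tendsto_pow_φg_atTop (n : ℕ) :
    Tendsto (fun x : ℝ => x ^ n * φg x) atTop (nhds 0) := by
  have hexp : Tendsto (fun x : ℝ => rexp (-(1/2) * x)) atTop (nhds 0) := by
    have hm : Tendsto (fun x : ℝ => (1/2 : ℝ) * x) atTop atTop :=
      Tendsto.const_mul_atTop (by norm_num) tendsto_id
    have := tendsto_exp_neg_atTop_nhds_zero.comp hm
    apply this.congr
    intro x
    simp [Function.comp, neg_mul]
  have h := (rpow_mul_exp_neg_mul_sq_isLittleO_exp_neg (b := 2⁻¹) (by norm_num)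
    (n : ℝ)).trans_tendsto hexp
  have h2 : Tendsto (fun x : ℝ => x ^ n * rexp (-2⁻¹ * x ^ 2)) atTop (nhds 0) := by
    apply h.congr'
    filter_upwards with x
    rw [Real.rpow_natCast]
  have h3 := h2.const_mul (√(2 * π))⁻¹
  simp only [mul_zero] at h3
  apply h3.congr
  intro x
  simp only [φg_def]
  ring

lemma tendsto_pow_φg_atBot (n : ℕ) :
    Tendsto (fun x : ℝ => x ^ n * φg x) atBot (nhds 0) := by
  have hφ : ∀ x : ℝ, φg (-x) = φg x := by
    intro x
    simp [φg_def]
  have h := ((tendsto_pow_φg_atTop n).const_mul ((-1 : ℝ) ^ n)).comp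
    tendsto_neg_atBot_atTop
  simp only [mul_zero] at h
  apply h.congr
  intro x
  simp only [Function.comp_apply]
  rw [hφ x, neg_pow x n, ← mul_assoc, ← mul_assoc, ← pow_add,
    Even.neg_one_pow (Even.add_self n), one_mul]

lemma integral_pow_mul_φg_succ (n : ℕ) :
    ∫ x, x ^ (n + 1) * φg x = n * ∫ x, x ^ (n - 1) * φg x := by
  set f : ℝ → ℝ := fun x => -(x ^ n * φg x) with hf
  set h : ℝ → ℝ := fun x => x ^ (n + 1) * φg x - n * (x ^ (n - 1) * φg x) with hh
  have hderiv : ∀ x : ℝ, HasDerivAt f (h x) x := by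
    intro x
    have := ((hasDerivAt_pow n x).mul (hasDerivAt_φg x)).neg
    apply this.congr_deriv
    simp only [hh]
    ring_nf
  have hint : Integrable h := by
    exact (integrable_pow_mul_φg (n + 1)).sub ((integrable_pow_mul_φg (n - 1)).const_mul n)
  have htop : Tendsto f atTop (nhds 0) := by
    simpa using (tendsto_pow_φg_atTop n).neg
  have hbot : Tendsto f atBot (nhds 0) := by
    simpa using (tendsto_pow_φg_atBot n).neg
  have hIoi : ∫ x in Set.Ioi (0:ℝ), h x = 0 - f 0 :=
    integral_Ioi_of_hasDerivAt_of_tendsto' (fun x _ => hderiv x) hint.integrableOn htop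
  have hIic : ∫ x in Set.Iic (0:ℝ), h x = f 0 - 0 :=
    integral_Iic_of_hasDerivAt_of_tendsto' (fun x _ => hderiv x) hint.integrableOn hbot
  have htot : ∫ x, h x = 0 := by
    rw [← intervalIntegral.integral_Iic_add_Ioi hint.integrableOn hint.integrableOn, hIoi, hIic]
    ring
  have hsub : ∫ x, h x = (∫ x, x ^ (n+1) * φg x) - n * ∫ x, x ^ (n-1) * φg x := by
    simp only [hh]
    rw [integral_sub (integrable_pow_mul_φg (n+1)) ((integrable_pow_mul_φg (n-1)).const_mul n),
      MeasureTheory.integral_const_mul]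
  linarith [htot, hsub]

noncomputable def Mo (n : ℕ) : ℝ := ∫ x, x ^ n ∂(gaussianReal 0 1)

lemma Mo_succ (n : ℕ) : Mo (n + 1) = n * Mo (n - 1) := by
  simp only [Mo, integral_gauss_eq]
  have c1 : ∫ x, φg x * x ^ (n+1) = ∫ x, x ^ (n+1) * φg x := by
    congr 1; ext x; ring
  have c2 : ∫ x, φg x * x ^ (n-1) = ∫ x, x ^ (n-1) * φg x := by
    congr 1; ext x; ring
  rw [c1, c2, integral_pow_mul_φg_succ]

noncomputable def stdGaussian (d : ℕ) : Measure (Fin d → ℝ) :=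
  Measure.pi fun _ => gaussianReal 0 1

section PiLemmas

noncomputable local instance : MeasureSpace ℝ := ⟨gaussianReal 0 1⟩

local instance : SigmaFinite (volume : Measure ℝ) := by
  show SigmaFinite (gaussianReal 0 1)
  infer_instance

lemma integrable_prod_gauss {d : ℕ} (f : Fin d → ℝ → ℝ)
    (hf : ∀ i, Integrable (f i) (gaussianReal 0 1)) :
    Integrable (fun x : Fin d → ℝ => ∏ i, f i (x i)) (stdGaussian d) :=
  MeasureTheory.Integrable.fintype_prod (f := f) hf

lemma integral_prod_gauss {d : ℕ} (f : Fin d → ℝ → ℝ) :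
    ∫ x, (∏ i, f i (x i)) ∂(stdGaussian d) = ∏ i, ∫ y, f i y ∂(gaussianReal 0 1) :=
  MeasureTheory.integral_fintype_prod_eq_prod f

end PiLemmas

open MvPolynomial

variable {d : ℕ}

lemma prod_pow_pad (x : Fin d → ℝ) (m : Fin d →₀ ℕ) :
    (∏ i ∈ m.support, x i ^ m i) = ∏ i : Fin d, x i ^ m i :=
  Finset.prod_subset (subset_univ _)
    (fun i _ hi => by simp [Finsupp.notMem_support_iff.mp hi])

lemma eval_monomial_prod (x : Fin d → ℝ) (m : Fin d →₀ ℕ) (c : ℝ) :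
    eval x (monomial m c) = c * ∏ i : Fin d, x i ^ m i := by
  rw [eval_monomial, Finsupp.prod, prod_pow_pad]

lemma integrable_eval (P : MvPolynomial (Fin d) ℝ) :
    Integrable (fun x => eval x P) (stdGaussian d) := by
  have : (fun x => eval x P)
      = fun x => ∑ m ∈ P.support, (P.coeff m * ∏ i : Fin d, x i ^ m i) := by
    funext x
    rw [eval_eq]
    exact Finset.sum_congr rfl fun m _ => by rw [prod_pow_pad]
  rw [this]
  apply integrable_finset_sum
  intro m _
  exact (integrable_prod_gauss (fun i t => t ^ m i)
    (fun i => integrable_pow_gauss (m i))).const_mul _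

lemma integral_monomial (m : Fin d →₀ ℕ) (c : ℝ) :
    ∫ x, eval x (monomial m c) ∂(stdGaussian d) = c * ∏ i, Mo (m i) := by
  simp only [eval_monomial_prod]
  rw [MeasureTheory.integral_const_mul]
  have h := integral_prod_gauss (d := d) (fun i t => t ^ m i)
  rw [h]
  rfl

/-- The Gaussian integral as a linear functional on polynomials. -/
noncomputable def Ig (d : ℕ) : MvPolynomial (Fin d) ℝ →ₗ[ℝ] ℝ where
  toFun := fun C => ∫ x, eval x C ∂(stdGaussian d)
  map_add' := fun C D => by
    simp only [map_add]
    exact integral_add (integrable_eval C) (integrable_eval D)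
  map_smul' := fun r C => by
    simp only [smul_eval, RingHom.id_apply, smul_eq_mul]
    exact MeasureTheory.integral_const_mul r _

lemma Ig_apply (C : MvPolynomial (Fin d) ℝ) :
    Ig d C = ∫ x, eval x C ∂(stdGaussian d) := rfl

/-- Gaussian integration by parts for polynomials. -/
lemma Ig_X_mul (i : Fin d) (C : MvPolynomial (Fin d) ℝ) :
    Ig d (X i * C) = Ig d (pderiv i C) := by
  induction C using MvPolynomial.induction_on' with
  | add p q hp hq => rw [mul_add, map_add, map_add, hp, hq, map_add]
  | monomial m c =>
    rw [X, monomial_mul, one_mul, pderiv_monomial, Ig_apply, Ig_apply,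
      integral_monomial, integral_monomial]
    have hLp : (∏ j : Fin d, Mo ((Finsupp.single i 1 + m : Fin d →₀ ℕ) j))
        = ∏ j : Fin d, Function.update (fun j => Mo (m j)) i (Mo (m i + 1)) j := by
      refine Finset.prod_congr rfl fun j _ => ?_
      rcases eq_or_ne j i with rfl | hji
      · rw [Function.update_self, Finsupp.add_apply, Finsupp.single_apply, if_pos rfl,
          add_comm]
      · rw [Function.update_of_ne hji, Finsupp.add_apply, Finsupp.single_apply,
          if_neg (fun h => hji h.symm), zero_add]
    have hRp : (∏ j : Fin d, Mo ((m - Finsupp.single i 1 : Fin d →₀ ℕ) j))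
        = ∏ j : Fin d, Function.update (fun j => Mo (m j)) i (Mo (m i - 1)) j := by
      refine Finset.prod_congr rfl fun j _ => ?_
      rcases eq_or_ne j i with rfl | hji
      · rw [Function.update_self, Finsupp.tsub_apply, Finsupp.single_apply, if_pos rfl]
      · rw [Function.update_of_ne hji, Finsupp.tsub_apply, Finsupp.single_apply,
          if_neg (fun h => hji h.symm), Nat.sub_zero]
    rw [hLp, hRp, Finset.prod_update_of_mem (mem_univ i),
      Finset.prod_update_of_mem (mem_univ i), Mo_succ (m i)]
    ring

open MvPolynomial

variable {d : ℕ}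

/-- Sum of exponents of a monomial, over all coordinates. -/
def degSum (m : Fin d →₀ ℕ) : ℕ := ∑ j : Fin d, m j

lemma finsuppSum_eq_degSum (m : Fin d →₀ ℕ) : (m.sum fun _ e => e) = degSum m := by
  rw [Finsupp.sum, degSum]
  exact Finset.sum_subset (subset_univ _)
    (fun i _ hi => Finsupp.notMem_support_iff.mp hi)

lemma degSum_le_totalDegree {P : MvPolynomial (Fin d) ℝ} {m : Fin d →₀ ℕ}
    (h : m ∈ P.support) : degSum m ≤ P.totalDegree := by
  rw [← finsuppSum_eq_degSum]
  exact le_totalDegree h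

/-- The number operator `∑ i, xᵢ ∂ᵢ`. -/
noncomputable def NOp (B : MvPolynomial (Fin d) ℝ) : MvPolynomial (Fin d) ℝ :=
  ∑ i : Fin d, X i * pderiv i B

/-- The Laplacian `∑ i, ∂ᵢ²`. -/
noncomputable def lapl (B : MvPolynomial (Fin d) ℝ) : MvPolynomial (Fin d) ℝ :=
  ∑ i : Fin d, pderiv i (pderiv i B)

/-- The Ornstein–Uhlenbeck operator `∑ i, xᵢ ∂ᵢ - Δ`. -/
noncomputable def Lop (B : MvPolynomial (Fin d) ℝ) : MvPolynomial (Fin d) ℝ :=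
  NOp B - lapl B

lemma NOp_add (B C : MvPolynomial (Fin d) ℝ) : NOp (B + C) = NOp B + NOp C := by
  simp only [NOp, map_add, mul_add, Finset.sum_add_distrib]

lemma X_mul_pderiv_monomial {i : Fin d} {m : Fin d →₀ ℕ} {c : ℝ} :
    X i * pderiv i (monomial m c) = monomial m (c * m i) := by
  rw [pderiv_monomial]
  rcases Nat.eq_zero_or_pos (m i) with h0 | hpos
  · rw [h0]
    simp
  · rw [X, monomial_mul, one_mul]
    have : Finsupp.single i 1 + (m - Finsupp.single i 1) = m := by
      ext a
      simp only [Finsupp.add_apply, Finsupp.tsub_apply, Finsupp.single_apply]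
      split_ifs with h
      · subst h; omega
      · omega
    rw [this]

lemma NOp_monomial (m : Fin d →₀ ℕ) (c : ℝ) :
    NOp (monomial m c) = monomial m ((degSum m : ℝ) * c) := by
  rw [NOp]
  have : ∀ i : Fin d, X i * pderiv i (monomial m c) = monomial m (c * m i) :=
    fun i => X_mul_pderiv_monomial
  rw [Finset.sum_congr rfl (fun i _ => this i)]
  rw [← map_sum (monomial m)]
  congr 1
  rw [← Finset.mul_sum, degSum]
  push_cast
  ring

lemma coeff_NOp (B : MvPolynomial (Fin d) ℝ) (m : Fin d →₀ ℕ) :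
    coeff m (NOp B) = (degSum m : ℝ) * coeff m B := by
  induction B using MvPolynomial.induction_on' with
  | add p q hp hq => rw [NOp_add, coeff_add, hp, hq, coeff_add, mul_add]
  | monomial m' c =>
    rw [NOp_monomial, coeff_monomial, coeff_monomial]
    split_ifs with h
    · subst h; rfl
    · rw [mul_zero]

lemma pderiv_comm (i j : Fin d) (B : MvPolynomial (Fin d) ℝ) :
    pderiv i (pderiv j B) = pderiv j (pderiv i B) := by
  induction B using MvPolynomial.induction_on' with
  | add p q hp hq => simp only [map_add, hp, hq]
  | monomial m c =>
    rcases eq_or_ne i j with rfl | hij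
    · rfl
    · rw [pderiv_monomial, pderiv_monomial, pderiv_monomial, pderiv_monomial]
      have h1 : (m - Finsupp.single j 1 : Fin d →₀ ℕ) i = m i := by
        rw [Finsupp.tsub_apply, Finsupp.single_apply, if_neg (fun h => hij h.symm),
          Nat.sub_zero]
      have h2 : (m - Finsupp.single i 1 : Fin d →₀ ℕ) j = m j := by
        rw [Finsupp.tsub_apply, Finsupp.single_apply, if_neg (fun h => hij h),
          Nat.sub_zero]
      have h3 : m - Finsupp.single j 1 - Finsupp.single i 1
          = m - Finsupp.single i 1 - Finsupp.single j 1 := by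
        ext a
        simp only [Finsupp.tsub_apply]
        omega
      rw [h1, h2, h3, mul_right_comm]

/-- The degree of a partial derivative drops. -/
lemma totalDegree_pderiv_le (i : Fin d) (B : MvPolynomial (Fin d) ℝ) (n : ℕ)
    (hB : B.totalDegree ≤ n + 1) : (pderiv i B).totalDegree ≤ n := by
  conv_lhs => rw [B.as_sum]
  rw [map_sum]
  refine (totalDegree_finset_sum _ _).trans (Finset.sup_le fun m hm => ?_)
  rw [pderiv_monomial]
  rcases Nat.eq_zero_or_pos (m i) with h0 | hpos
  · rw [h0]
    simp
  · refine (totalDegree_monomial_le _ _).trans ?_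
    have hrw : ((m - Finsupp.single i 1).sum fun _ => id) = degSum (m - Finsupp.single i 1) :=
      finsuppSum_eq_degSum _
    rw [hrw]
    have hms : degSum m ≤ n + 1 := (degSum_le_totalDegree hm).trans hB
    have h1 : degSum m = m i + ∑ j ∈ univ.erase i, m j := by
      rw [degSum, ← Finset.add_sum_erase _ _ (mem_univ i)]
    have h2 : degSum (m - Finsupp.single i 1) = (m i - 1) + ∑ j ∈ univ.erase i, m j := by
      rw [degSum, ← Finset.add_sum_erase _ _ (mem_univ i)]
      congr 1
      · rw [Finsupp.tsub_apply, Finsupp.single_apply, if_pos rfl]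
      · refine Finset.sum_congr rfl fun j hj => ?_
        rw [Finsupp.tsub_apply, Finsupp.single_apply,
          if_neg (fun h => (Finset.mem_erase.mp hj).1 (Eq.symm h)), Nat.sub_zero]
    omega

lemma totalDegree_lapl_le (B : MvPolynomial (Fin d) ℝ) {k : ℕ} (hk : 1 ≤ k)
    (hB : B.totalDegree ≤ k) : (lapl B).totalDegree ≤ k - 1 := by
  refine (totalDegree_finset_sum _ _).trans (Finset.sup_le fun i _ => ?_)
  refine totalDegree_pderiv_le _ _ _ ?_
  refine (totalDegree_pderiv_le _ _ (k - 1) ?_).trans (by omega)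
  omega

lemma totalDegree_NOp_sub_le (B : MvPolynomial (Fin d) ℝ) {k : ℕ} (hk : 1 ≤ k)
    (hB : B.totalDegree ≤ k) :
    (NOp B - C (k : ℝ) * B).totalDegree ≤ k - 1 := by
  rw [totalDegree]
  refine Finset.sup_le fun m hm => ?_
  rw [finsuppSum_eq_degSum]
  rw [mem_support_iff] at hm
  have hco : coeff m (NOp B - C (k:ℝ) * B) = ((degSum m : ℝ) - k) * coeff m B := by
    rw [coeff_sub, coeff_NOp, coeff_C_mul]
    ring
  rw [hco] at hm
  have hmB : coeff m B ≠ 0 := fun h => hm (by rw [h, mul_zero])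
  have hne : (degSum m : ℝ) ≠ (k : ℝ) := fun h => hm (by rw [h, sub_self, zero_mul])
  have hle : degSum m ≤ k := (degSum_le_totalDegree (mem_support_iff.mpr hmB)).trans hB
  have : degSum m ≠ k := fun h => hne (by rw [h])
  omega

lemma totalDegree_Lop_sub_le (B : MvPolynomial (Fin d) ℝ) {k : ℕ} (hk : 1 ≤ k)
    (hB : B.totalDegree ≤ k) :
    (Lop B - C (k : ℝ) * B).totalDegree < k := by
  have h1 : Lop B - C (k:ℝ) * B = (NOp B - C (k:ℝ) * B) - lapl B := by
    rw [Lop]; ring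
  rw [h1]
  refine (totalDegree_sub _ _).trans_lt ?_
  have h2 := totalDegree_NOp_sub_le B hk hB
  have h3 := totalDegree_lapl_le B hk hB
  omega

lemma totalDegree_Lop_le (B : MvPolynomial (Fin d) ℝ) {k : ℕ} (hk : 1 ≤ k)
    (hB : B.totalDegree ≤ k) : (Lop B).totalDegree ≤ k := by
  have : Lop B = (Lop B - C (k:ℝ) * B) + C (k:ℝ) * B := by ring
  rw [this]
  refine (totalDegree_add _ _).trans ?_
  have h1 := (totalDegree_Lop_sub_le B hk hB).le
  have h2 : (C (k:ℝ) * B).totalDegree ≤ k := by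
    refine (totalDegree_mul _ _).trans ?_
    rw [totalDegree_C]
    omega
  omega

/-- Commutator relation: `[L, ∂ᵢ] = -∂ᵢ`. -/
lemma Lop_pderiv (i : Fin d) (B : MvPolynomial (Fin d) ℝ) :
    Lop (pderiv i B) = pderiv i (Lop B) - pderiv i B := by
  have hN : pderiv i (NOp B) = pderiv i B + NOp (pderiv i B) := by
    rw [NOp, map_sum]
    have : ∀ j : Fin d, pderiv i (X j * pderiv j B)
        = (if j = i then pderiv i B else 0) + X j * pderiv j (pderiv i B) := by
      intro j
      rw [pderiv_mul]
      rcases eq_or_ne j i with rfl | hji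
      · rw [pderiv_X_self, one_mul, if_pos rfl, pderiv_comm]
      · rw [pderiv_X_of_ne hji, zero_mul, if_neg hji, pderiv_comm]
    rw [Finset.sum_congr rfl (fun j _ => this j), Finset.sum_add_distrib,
      Finset.sum_ite_eq' univ i (fun _ => pderiv i B), if_pos (mem_univ i), NOp]
  have hD : pderiv i (lapl B) = lapl (pderiv i B) := by
    rw [lapl, map_sum, lapl]
    exact Finset.sum_congr rfl fun j _ => by
      rw [pderiv_comm i j, pderiv_comm i j B]
  rw [Lop, Lop, map_sub, hN, hD]
  ring
/-- The iterated partial derivative `∂_{J 0} ⋯ ∂_{J (ℓ-1)} P` of a polynomial `P`. -/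
noncomputable def iterDeriv {d : ℕ} {ℓ : ℕ} (J : Fin ℓ → Fin d)
    (P : MvPolynomial (Fin d) ℝ) : MvPolynomial (Fin d) ℝ :=
  (List.ofFn J).foldr (fun i Q => MvPolynomial.pderiv i Q) P

section MainPart

variable {d : ℕ}

instance : (gaussianReal 0 1).IsOpenPosMeasure :=
  (gaussianReal_absolutelyContinuous' 0 one_ne_zero).isOpenPosMeasure

instance : (stdGaussian d).IsOpenPosMeasure := by
  unfold _root_.stdGaussian; infer_instance

instance : IsProbabilityMeasure (stdGaussian d) := by
  unfold _root_.stdGaussian; infer_instance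

/-- Gaussian integration by parts, summed form. -/
lemma Ig_sum_pderiv (A B : MvPolynomial (Fin d) ℝ) :
    ∑ i : Fin d, Ig d (pderiv i A * pderiv i B) = Ig d (A * Lop B) := by
  have step : ∀ i : Fin d, Ig d (pderiv i A * pderiv i B)
      = Ig d (A * (X i * pderiv i B)) - Ig d (A * pderiv i (pderiv i B)) := by
    intro i
    have h := Ig_X_mul i (A * pderiv i B)
    rw [pderiv_mul, map_add] at h
    have hc : X i * (A * pderiv i B) = A * (X i * pderiv i B) := by ring
    rw [hc] at h
    linarith
  rw [Finset.sum_congr rfl (fun i _ => step i), Finset.sum_sub_distrib,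
    ← map_sum, ← map_sum, ← map_sub]
  congr 1
  rw [Lop, mul_sub, NOp, lapl, Finset.mul_sum, Finset.mul_sum]

lemma Ig_selfAdjoint (A B : MvPolynomial (Fin d) ℝ) :
    Ig d (Lop A * B) = Ig d (A * Lop B) := by
  calc Ig d (Lop A * B) = Ig d (B * Lop A) := by rw [mul_comm]
    _ = ∑ i : Fin d, Ig d (pderiv i B * pderiv i A) := (Ig_sum_pderiv B A).symm
    _ = ∑ i : Fin d, Ig d (pderiv i A * pderiv i B) :=
        Finset.sum_congr rfl fun i _ => by rw [mul_comm]
    _ = Ig d (A * Lop B) := Ig_sum_pderiv A B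

lemma Ig_C_mul (c : ℝ) (A : MvPolynomial (Fin d) ℝ) :
    Ig d (C c * A) = c * Ig d A := by
  rw [← MvPolynomial.smul_eq_C_mul, LinearMap.map_smul, smul_eq_mul]

/-- Harmonic polynomials of degree `k` are eigenfunctions of the OU operator. -/
lemma Lop_eigen (k : ℕ) (hk : 1 ≤ k) (Q : MvPolynomial (Fin d) ℝ)
    (hQdeg : Q.totalDegree ≤ k)
    (hQorth : ∀ R : MvPolynomial (Fin d) ℝ, R.totalDegree < k → Ig d (Q * R) = 0) :
    Lop Q = C (k : ℝ) * Q := by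
  set s : MvPolynomial (Fin d) ℝ := Lop Q - C (k : ℝ) * Q with hs
  have horth : ∀ r : MvPolynomial (Fin d) ℝ, r.totalDegree ≤ k → Ig d (s * r) = 0 := by
    intro r hr
    have h1 : Ig d (Lop Q * r) = Ig d (Q * Lop r) := Ig_selfAdjoint Q r
    have h2 : Q * Lop r = C (k:ℝ) * (Q * r) + Q * (Lop r - C (k:ℝ) * r) := by ring
    have h3 : Ig d (Q * Lop r)
        = (k:ℝ) * Ig d (Q * r) + Ig d (Q * (Lop r - C (k:ℝ) * r)) := by
      rw [h2, map_add, Ig_C_mul]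
    have h4 : Ig d (Q * (Lop r - C (k:ℝ) * r)) = 0 :=
      hQorth _ (totalDegree_Lop_sub_le r hk hr)
    have h5 : Ig d (s * r) = Ig d (Lop Q * r) - Ig d (C (k:ℝ) * (Q * r)) := by
      rw [hs]
      rw [show (Lop Q - C (k:ℝ) * Q) * r = Lop Q * r - C (k:ℝ) * (Q * r) from by ring,
        map_sub]
    rw [h5, Ig_C_mul, h1, h3, h4]
    ring
  have hdeg : s.totalDegree ≤ k := (totalDegree_Lop_sub_le Q hk hQdeg).le
  have h0 : Ig d (s * s) = 0 := horth s hdeg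
  have hint : ∫ x, (eval x s) ^ 2 ∂(stdGaussian d) = 0 := by
    rw [← h0, Ig_apply]
    congr 1
    funext x
    rw [map_mul, sq]
  have hintg : Integrable (fun x => (eval x s) ^ 2) (stdGaussian d) := by
    have := integrable_eval (s * s)
    apply this.congr
    filter_upwards with x
    rw [map_mul, sq]
  have hae : (fun x => (eval x s) ^ 2) =ᵐ[stdGaussian d] 0 :=
    (integral_eq_zero_iff_of_nonneg (fun x => sq_nonneg _) hintg).mp hint
  have hcont : Continuous fun x : Fin d → ℝ => (eval x s) ^ 2 :=
    (MvPolynomial.continuous_eval s).pow 2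
  have heq : (fun x : Fin d → ℝ => (eval x s) ^ 2) = 0 :=
    (Continuous.ae_eq_iff_eq (stdGaussian d) hcont continuous_const).mp hae
  have hz : ∀ x : Fin d → ℝ, eval x s = 0 := by
    intro x
    have := congrFun heq x
    simpa [pow_eq_zero_iff] using this
  have hs0 : s = 0 := MvPolynomial.funext (fun x => by rw [hz x, map_zero])
  have := sub_eq_zero.mp hs0
  exact this

lemma iterDeriv_zero (J : Fin 0 → Fin d) (P : MvPolynomial (Fin d) ℝ) :
    iterDeriv J P = P := by
  simp [iterDeriv, List.ofFn_zero]

lemma iterDeriv_succ {ℓ : ℕ} (i : Fin d) (J : Fin ℓ → Fin d)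
    (P : MvPolynomial (Fin d) ℝ) :
    iterDeriv (Fin.cons i J) P = pderiv i (iterDeriv J P) := by
  unfold iterDeriv
  rw [List.ofFn_succ]
  simp only [Fin.cons_zero, Fin.cons_succ, List.foldr_cons]

lemma totalDegree_iterDeriv_le {ℓ n : ℕ} (J : Fin ℓ → Fin d)
    (P : MvPolynomial (Fin d) ℝ) (h : P.totalDegree ≤ ℓ + n) :
    (iterDeriv J P).totalDegree ≤ n := by
  induction ℓ generalizing n with
  | zero => rw [iterDeriv_zero]; simpa using h
  | succ ℓ ih =>
    rw [← Fin.cons_self_tail J, iterDeriv_succ]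
    exact totalDegree_pderiv_le _ _ n (ih (Fin.tail J) (by omega))

lemma Lop_iterDeriv {k ℓ : ℕ} (hℓ : ℓ ≤ k) (Q : MvPolynomial (Fin d) ℝ)
    (hQ : Lop Q = C (k : ℝ) * Q) (J : Fin ℓ → Fin d) :
    Lop (iterDeriv J Q) = C ((k : ℝ) - ℓ) * iterDeriv J Q := by
  induction ℓ with
  | zero =>
    rw [iterDeriv_zero]
    simpa using hQ
  | succ ℓ ih =>
    rw [← Fin.cons_self_tail J, iterDeriv_succ, Lop_pderiv,
      ih (by omega) (Fin.tail J)]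
    have hC : pderiv (J 0) (C ((k:ℝ) - ℓ) * iterDeriv (Fin.tail J) Q)
        = C ((k:ℝ) - ℓ) * pderiv (J 0) (iterDeriv (Fin.tail J) Q) := by
      rw [pderiv_mul, pderiv_C, zero_mul, zero_add]
    have h2 : (C ((k:ℝ) - ((ℓ+1 : ℕ) : ℝ)) : MvPolynomial (Fin d) ℝ)
        = C ((k:ℝ) - ℓ) - 1 := by
      rw [show (k:ℝ) - ((ℓ+1 : ℕ) : ℝ) = ((k:ℝ) - ℓ) - 1 from by push_cast; ring,
        map_sub, C_1]
    rw [hC, h2, sub_mul, one_mul]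

lemma eval_const_of_totalDegree_zero {p : MvPolynomial (Fin d) ℝ}
    (h : p.totalDegree = 0) (x y : Fin d → ℝ) : eval x p = eval y p := by
  rw [eval_eq, eval_eq]
  refine Finset.sum_congr rfl fun m hm => ?_
  have hz : ∀ i, m i = 0 := fun i => (totalDegree_eq_zero_iff (Fin d) p).mp h m hm i
  have hsupp : m.support = ∅ := by
    rw [Finsupp.support_eq_empty]
    ext a
    exact hz a
  rw [hsupp]
  simp

theorem stmt10 (d k : ℕ) (P Q : MvPolynomial (Fin d) ℝ)
    (hPdeg : P.totalDegree ≤ k) (hQdeg : Q.totalDegree ≤ k)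
    (hPorth : ∀ R : MvPolynomial (Fin d) ℝ, R.totalDegree < k →
      ∫ x, MvPolynomial.eval x P * MvPolynomial.eval x R ∂stdGaussian d = 0)
    (hQorth : ∀ R : MvPolynomial (Fin d) ℝ, R.totalDegree < k →
      ∫ x, MvPolynomial.eval x Q * MvPolynomial.eval x R ∂stdGaussian d = 0) :
    (∀ ℓ : ℕ, ℓ ≤ k →
      ∫ x, (∑ J : Fin ℓ → Fin d,
          MvPolynomial.eval x (iterDeriv J P) * MvPolynomial.eval x (iterDeriv J Q))
        ∂stdGaussian d =
      (Nat.descFactorial k ℓ : ℝ) *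
        ∫ x, MvPolynomial.eval x P * MvPolynomial.eval x Q ∂stdGaussian d) ∧
    (∀ x : Fin d → ℝ,
      (∑ J : Fin k → Fin d,
          MvPolynomial.eval x (iterDeriv J P) * MvPolynomial.eval x (iterDeriv J Q)) =
      (Nat.factorial k : ℝ) *
        ∫ y, MvPolynomial.eval y P * MvPolynomial.eval y Q ∂stdGaussian d) := by
  have hQorthI : ∀ R : MvPolynomial (Fin d) ℝ, R.totalDegree < k → Ig d (Q * R) = 0 := by
    intro R hR
    rw [Ig_apply, ← hQorth R hR]
    congr 1
    funext x
    rw [map_mul]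
  have hIPQ : Ig d (P * Q) = ∫ x, eval x P * eval x Q ∂(stdGaussian d) := by
    rw [Ig_apply]
    congr 1
    funext x
    rw [map_mul]
  -- the key identity at the level of `Ig`
  have key : ∀ ℓ : ℕ, ℓ ≤ k →
      (∑ J : Fin ℓ → Fin d, Ig d (iterDeriv J P * iterDeriv J Q))
        = (Nat.descFactorial k ℓ : ℝ) * Ig d (P * Q) := by
    intro ℓ
    induction ℓ with
    | zero =>
      intro _
      have h1 : ∀ J : Fin 0 → Fin d, Ig d (iterDeriv J P * iterDeriv J Q) = Ig d (P * Q) :=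
        fun J => by rw [iterDeriv_zero, iterDeriv_zero]
      rw [Finset.sum_congr rfl (fun J _ => h1 J), Finset.sum_const, Finset.card_univ]
      simp
    | succ ℓ ih =>
      intro hsk
      have hℓk : ℓ < k := hsk
      have hk1 : 1 ≤ k := by omega
      have hLQ : Lop Q = C (k:ℝ) * Q := Lop_eigen k hk1 Q hQdeg hQorthI
      have hre : (∑ J : Fin (ℓ+1) → Fin d, Ig d (iterDeriv J P * iterDeriv J Q))
          = ∑ p : Fin d × (Fin ℓ → Fin d),
              Ig d (iterDeriv (Fin.cons p.1 p.2) P * iterDeriv (Fin.cons p.1 p.2) Q) :=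
        (Fintype.sum_equiv (Fin.consEquiv (fun _ => Fin d))
          (fun p => Ig d (iterDeriv (Fin.cons p.1 p.2) P * iterDeriv (Fin.cons p.1 p.2) Q))
          (fun J => Ig d (iterDeriv J P * iterDeriv J Q))
          (fun p => rfl)).symm
      rw [hre, Fintype.sum_prod_type_right]
      have hinner : ∀ J' : Fin ℓ → Fin d,
          (∑ i : Fin d, Ig d (iterDeriv (Fin.cons i J') P * iterDeriv (Fin.cons i J') Q))
            = ((k:ℝ) - ℓ) * Ig d (iterDeriv J' P * iterDeriv J' Q) := by
        intro J'
        have h1 : ∀ i : Fin d, iterDeriv (Fin.cons i J') P * iterDeriv (Fin.cons i J') Q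
            = pderiv i (iterDeriv J' P) * pderiv i (iterDeriv J' Q) := by
          intro i
          rw [iterDeriv_succ, iterDeriv_succ]
        rw [Finset.sum_congr rfl (fun i _ => congrArg (Ig d) (h1 i)),
          Ig_sum_pderiv, Lop_iterDeriv hℓk.le Q hLQ J',
          show iterDeriv J' P * (C ((k:ℝ) - ℓ) * iterDeriv J' Q)
            = C ((k:ℝ) - ℓ) * (iterDeriv J' P * iterDeriv J' Q) from by ring,
          Ig_C_mul]
      rw [Finset.sum_congr rfl (fun J' _ => hinner J'), ← Finset.mul_sum,
        ih (by omega), Nat.descFactorial_succ]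
      rw [Nat.cast_mul, Nat.cast_sub hℓk.le]
      ring
  have part1 : ∀ ℓ : ℕ, ℓ ≤ k →
      ∫ x, (∑ J : Fin ℓ → Fin d,
          MvPolynomial.eval x (iterDeriv J P) * MvPolynomial.eval x (iterDeriv J Q))
        ∂stdGaussian d =
      (Nat.descFactorial k ℓ : ℝ) *
        ∫ x, MvPolynomial.eval x P * MvPolynomial.eval x Q ∂stdGaussian d := by
    intro ℓ hℓ
    have hswap : ∫ x, (∑ J : Fin ℓ → Fin d,
          eval x (iterDeriv J P) * eval x (iterDeriv J Q)) ∂(stdGaussian d)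
        = ∑ J : Fin ℓ → Fin d, Ig d (iterDeriv J P * iterDeriv J Q) := by
      rw [integral_finset_sum]
      · refine Finset.sum_congr rfl fun J _ => ?_
        rw [Ig_apply]
        congr 1
        funext x
        rw [map_mul]
      · intro J _
        have := integrable_eval (iterDeriv J P * iterDeriv J Q)
        apply this.congr
        filter_upwards with x
        rw [map_mul]
    rw [hswap, key ℓ hℓ, hIPQ]
  refine ⟨part1, ?_⟩
  intro x
  -- each iterated derivative of order `k` is a constant polynomial
  have hconstP : ∀ (J : Fin k → Fin d) (y : Fin d → ℝ),
      eval y (iterDeriv J P) = eval 0 (iterDeriv J P) := by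
    intro J y
    refine eval_const_of_totalDegree_zero ?_ y 0
    have := totalDegree_iterDeriv_le J P (by omega : P.totalDegree ≤ k + 0)
    omega
  have hconstQ : ∀ (J : Fin k → Fin d) (y : Fin d → ℝ),
      eval y (iterDeriv J Q) = eval 0 (iterDeriv J Q) := by
    intro J y
    refine eval_const_of_totalDegree_zero ?_ y 0
    have := totalDegree_iterDeriv_le J Q (by omega : Q.totalDegree ≤ k + 0)
    omega
  have hconst : ∀ y : Fin d → ℝ,
      (∑ J : Fin k → Fin d, eval y (iterDeriv J P) * eval y (iterDeriv J Q))
      = ∑ J : Fin k → Fin d, eval 0 (iterDeriv J P) * eval 0 (iterDeriv J Q) := by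
    intro y
    exact Finset.sum_congr rfl fun J _ => by rw [hconstP J y, hconstQ J y]
  have hp1 := part1 k le_rfl
  have hci : ∫ z, (∑ J : Fin k → Fin d,
        eval z (iterDeriv J P) * eval z (iterDeriv J Q)) ∂(stdGaussian d)
      = ∑ J : Fin k → Fin d, eval 0 (iterDeriv J P) * eval 0 (iterDeriv J Q) := by
    rw [integral_congr_ae (ae_of_all _ hconst), integral_const]
    simp
  rw [hconst x, ← hci, hp1, Nat.descFactorial_self]
end MainPart
end
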